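/- arXiv:1508.05429 — 3 statements merged into one kernel-verified Lean document; each statement's English description precedes it below -/
import Mathlib

section
/- Let h : ℝ → ℂ be integrable and square-integrable, let T₀ ≥ 0, and suppose h(t) = 0 for all t < T₀. Then for every T with 0 ≤ T ≤ T₀, the shifted transfer function w ↦ e^{i w T} H(w), where H(w) = ∫_{-∞}^{∞} h(t) e^{-i w t} dt, is causal: for almost every real w, e^{i w T} H(w) = (1/(π i)) · p.v.∫ e^{i w' T} H(w')/(w − w') dw', the principal-value integral existing for almost every w. -/
open MeasureTheory Filter Set Real


noncomputable def sinc (t : ℝ) : ℝ := Real.sin t / t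

lemma sinc_meas : Measurable _root_.sinc := Real.measurable_sin.div measurable_id

lemma abs_sinc_le_one (t : ℝ) : |_root_.sinc t| ≤ 1 := by
  rcases eq_or_ne t 0 with rfl | ht
  · simp [_root_.sinc]
  · rw [_root_.sinc, abs_div]
    rw [div_le_one (abs_pos.mpr ht)]
    exact Real.abs_sin_le_abs

lemma sinc_intInt (a b : ℝ) : IntervalIntegrable _root_.sinc volume a b := by
  rw [intervalIntegrable_iff]
  apply Measure.integrableOn_of_bounded (M := 1)
  · exact (measure_Ioc_lt_top).ne
  · exact sinc_meas.aestronglyMeasurable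
  · exact Eventually.of_forall fun t => by
      simpa [Real.norm_eq_abs] using _root_.abs_sinc_le_one t

noncomputable def Si (x : ℝ) : ℝ := ∫ t in (0:ℝ)..x, _root_.sinc t

set_option maxHeartbeats 1000000

lemma integral_exp_neg_mul_Ioi {t : ℝ} (ht : 0 < t) :
    ∫ u in Ioi (0:ℝ), Real.exp (-(u*t)) = 1/t := by
  have hderiv : ∀ x ∈ Ioi (0:ℝ), HasDerivAt (fun u => -Real.exp (-(u*t))/t) (Real.exp (-(x*t))) x := by
    intro x _
    have h1 : HasDerivAt (fun u : ℝ => -(u*t)) (-t) x := by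
      have := ((hasDerivAt_id x).mul_const t).neg
      simp only [id, one_mul] at this
      exact this
    have h2 := (h1.exp).neg.div_const t
    refine h2.congr_deriv ?_
    field_simp
  have hint : IntegrableOn (fun u => Real.exp (-(u*t))) (Ioi (0:ℝ)) := by
    exact (exp_neg_integrableOn_Ioi 0 ht).congr_fun
      (fun u _ => by dsimp only; rw [neg_mul, mul_comm]) measurableSet_Ioi
  have hm : Tendsto (fun u => -Real.exp (-(u*t))/t) atTop (nhds 0) := by
    have h0 : Tendsto (fun u : ℝ => -(u*t)) atTop atBot := by
      apply tendsto_neg_atBot_iff.mpr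
      exact Tendsto.atTop_mul_const ht tendsto_id
    have := (Real.tendsto_exp_atBot.comp h0).neg.div_const t
    simpa using this
  have hcont : ContinuousWithinAt (fun u => -Real.exp (-(u*t))/t) (Ici (0:ℝ)) 0 :=
    (Continuous.continuousWithinAt (by fun_prop))
  rw [MeasureTheory.integral_Ioi_of_hasDerivAt_of_tendsto hcont hderiv hint hm]
  simp [div_eq_mul_inv]

lemma integral_exp_sin (u X : ℝ) :
    ∫ t in (0:ℝ)..X, Real.exp (-(u*t)) * Real.sin t
      = (1 - Real.exp (-(u*X)) * (Real.cos X + u * Real.sin X))/(1+u^2) := by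
  have hderiv : ∀ x ∈ uIcc (0:ℝ) X,
      HasDerivAt (fun t => -(Real.exp (-(u*t)) * (Real.cos t + u * Real.sin t))/(1+u^2))
        (Real.exp (-(u*x)) * Real.sin x) x := by
    intro x _
    have h1 : HasDerivAt (fun t : ℝ => -(u*t)) (-u) x := by
      have := ((hasDerivAt_id x).const_mul u).neg
      simp only [id, mul_one] at this
      exact this
    have h3 : HasDerivAt (fun t : ℝ => Real.cos t + u * Real.sin t)
        (-Real.sin x + u * Real.cos x) x :=
      (Real.hasDerivAt_cos x).add ((Real.hasDerivAt_sin x).const_mul u)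
    have h4 := ((h1.exp.mul h3).neg).div_const (1+u^2)
    refine h4.congr_deriv ?_
    have hu : (1:ℝ) + u^2 ≠ 0 := by positivity
    field_simp
    ring
  rw [intervalIntegral.integral_eq_sub_of_hasDerivAt hderiv
    (Continuous.intervalIntegrable (by fun_prop) _ _)]
  have hu : (1:ℝ) + u^2 ≠ 0 := by positivity
  field_simp
  simp only [mul_zero, neg_zero, Real.exp_zero, Real.sin_zero, Real.cos_zero]
  ring

lemma integral_Ioi_inv_one_add_sq' : ∫ u in Ioi (0:ℝ), (1+u^2)⁻¹ = π/2 := by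
  have hderiv : ∀ x ∈ Ioi (0:ℝ), HasDerivAt Real.arctan ((1+x^2)⁻¹) x := by
    intro x _
    simpa [one_div] using Real.hasDerivAt_arctan x
  rw [MeasureTheory.integral_Ioi_of_hasDerivAt_of_tendsto
    (Real.continuous_arctan.continuousWithinAt) hderiv
    integrable_inv_one_add_sq.integrableOn
    (Real.tendsto_arctan_atTop.mono_right nhdsWithin_le_nhds)]
  simp

lemma cont_err (X : ℝ) :
    Continuous (fun u => Real.exp (-(u*X)) * (Real.cos X + u * Real.sin X)/(1+u^2)) :=
  Continuous.div (by fun_prop) (by fun_prop) (fun u => by positivity)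

lemma err_bound (X : ℝ) (u : ℝ) (hu : 0 ≤ u) :
    ‖Real.exp (-(u*X)) * (Real.cos X + u * Real.sin X)/(1+u^2)‖ ≤ 2 * Real.exp (-X*u) := by
  rw [Real.norm_eq_abs, abs_div, abs_mul, Real.abs_exp, abs_of_pos (by positivity : (0:ℝ) < 1+u^2)]
  rw [div_le_iff₀ (by positivity)]
  have h1 : |Real.cos X + u * Real.sin X| ≤ 1 + u := by
    calc |Real.cos X + u * Real.sin X| ≤ |Real.cos X| + |u * Real.sin X| := abs_add_le _ _
    _ ≤ 1 + u := by
        gcongr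
        · exact Real.abs_cos_le_one X
        · rw [abs_mul, abs_of_nonneg hu]
          calc u * |Real.sin X| ≤ u * 1 := by gcongr; exact Real.abs_sin_le_one X
          _ = u := mul_one u
  calc Real.exp (-(u*X)) * |Real.cos X + u * Real.sin X| ≤ Real.exp (-(u*X)) * (1+u) := by gcongr
  _ ≤ Real.exp (-(u*X)) * (2*(1+u^2)) := by
      gcongr
      nlinarith [sq_nonneg (u-1)]
  _ = 2 * Real.exp (-X*u) * (1+u^2) := by rw [neg_mul, mul_comm X u]; ring

lemma err_integrable (X : ℝ) (hX : 0 < X) :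
    IntegrableOn (fun u => Real.exp (-(u*X)) * (Real.cos X + u * Real.sin X)/(1+u^2)) (Ioi (0:ℝ)) := by
  apply Integrable.mono' ((exp_neg_integrableOn_Ioi 0 hX).const_mul 2)
  · exact (cont_err X).aestronglyMeasurable
  · filter_upwards [ae_restrict_mem measurableSet_Ioi] with u hu
    exact err_bound X u (le_of_lt hu)

lemma Si_eq (X : ℝ) (hX : 0 < X) :
    Si X = π/2 - ∫ u in Ioi (0:ℝ), Real.exp (-(u*X)) * (Real.cos X + u * Real.sin X)/(1+u^2) := by
  have key : Si X = ∫ u in Ioi (0:ℝ), (1 - Real.exp (-(u*X)) * (Real.cos X + u * Real.sin X))/(1+u^2) := by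
    have hF : Integrable (Function.uncurry fun t u => Real.exp (-(u*t)) * Real.sin t)
        ((volume.restrict (Ioc 0 X)).prod (volume.restrict (Ioi 0))) := by
      have hmeas : AEStronglyMeasurable (Function.uncurry fun t u => Real.exp (-(u*t)) * Real.sin t)
          ((volume.restrict (Ioc 0 X)).prod (volume.restrict (Ioi 0))) :=
        (Continuous.aestronglyMeasurable (by fun_prop))
      rw [MeasureTheory.integrable_prod_iff hmeas]
      simp only [Function.uncurry_apply_pair]
      constructor
      · filter_upwards [ae_restrict_mem measurableSet_Ioc] with t ht
        exact ((exp_neg_integrableOn_Ioi 0 ht.1).congr_fun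
          (fun u _ => by rw [neg_mul, mul_comm]) measurableSet_Ioi).mul_const _
      · apply Integrable.congr (g := fun t => ∫ u in Ioi (0:ℝ), ‖Real.exp (-(u*t)) * Real.sin t‖)
          (f := fun t => |Real.sin t| / t)
        · apply Measure.integrableOn_of_bounded (M := 1) measure_Ioc_lt_top.ne
            ((measurable_sin.abs.div measurable_id).aestronglyMeasurable)
          filter_upwards [ae_restrict_mem measurableSet_Ioc] with t ht
          simp only [Pi.div_apply, id_eq, Real.norm_eq_abs, abs_div, abs_abs]
          rw [abs_of_pos ht.1, div_le_one ht.1]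
          exact Real.abs_sin_le_abs.trans_eq (abs_of_pos ht.1)
        · filter_upwards [ae_restrict_mem measurableSet_Ioc] with t ht
          have hn : ∀ u : ℝ, ‖Real.exp (-(u*t)) * Real.sin t‖ = Real.exp (-(u*t)) * |Real.sin t| := by
            intro u
            rw [norm_mul, Real.norm_eq_abs, Real.norm_eq_abs, Real.abs_exp]
          simp only [hn]
          rw [MeasureTheory.integral_mul_const, integral_exp_neg_mul_Ioi ht.1]
          rw [div_eq_mul_inv, mul_comm, one_div]
    have swap := MeasureTheory.integral_integral_swap hF
    have lhs : ∫ t in Ioc (0:ℝ) X, ∫ u in Ioi (0:ℝ), Real.exp (-(u*t)) * Real.sin t = Si X := by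
      rw [Si, intervalIntegral.integral_of_le (le_of_lt hX)]
      apply setIntegral_congr_fun measurableSet_Ioc
      intro t ht
      show (∫ u in Ioi (0:ℝ), Real.exp (-(u*t)) * Real.sin t) = _root_.sinc t
      rw [MeasureTheory.integral_mul_const, integral_exp_neg_mul_Ioi ht.1, _root_.sinc]
      field_simp
    rw [lhs] at swap
    rw [swap]
    apply setIntegral_congr_fun measurableSet_Ioi
    intro u _
    show (∫ t in Ioc (0:ℝ) X, Real.exp (-(u*t)) * Real.sin t)
      = (1 - Real.exp (-(u*X)) * (Real.cos X + u * Real.sin X))/(1+u^2)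
    rw [← intervalIntegral.integral_of_le (le_of_lt hX), integral_exp_sin]
  rw [key]
  rw [show (fun u : ℝ => (1 - Real.exp (-(u*X)) * (Real.cos X + u * Real.sin X))/(1+u^2))
      = fun u : ℝ => (1+u^2)⁻¹ - Real.exp (-(u*X)) * (Real.cos X + u * Real.sin X)/(1+u^2) by
    funext u
    have hu : (1:ℝ) + u^2 ≠ 0 := by positivity
    field_simp]
  rw [MeasureTheory.integral_sub integrable_inv_one_add_sq.integrableOn (err_integrable X hX)]
  rw [integral_Ioi_inv_one_add_sq']

lemma tendsto_Si : Tendsto Si atTop (nhds (π/2)) := by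
  have herr : Tendsto (fun X => ∫ u in Ioi (0:ℝ),
      Real.exp (-(u*X)) * (Real.cos X + u * Real.sin X)/(1+u^2)) atTop (nhds 0) := by
    apply squeeze_zero_norm' (a := fun X => 2/X)
    · filter_upwards [eventually_gt_atTop (0:ℝ)] with X hX
      calc ‖∫ u in Ioi (0:ℝ), Real.exp (-(u*X)) * (Real.cos X + u * Real.sin X)/(1+u^2)‖
          ≤ ∫ u in Ioi (0:ℝ), 2 * Real.exp (-X*u) := by
            apply norm_integral_le_of_norm_le ((exp_neg_integrableOn_Ioi 0 hX).const_mul 2)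
            filter_upwards [ae_restrict_mem measurableSet_Ioi] with u hu
            exact err_bound X u (le_of_lt hu)
      _ = 2/X := by
            rw [MeasureTheory.integral_const_mul]
            rw [show (fun u : ℝ => Real.exp (-X*u)) = fun u : ℝ => Real.exp (-(u*X)) by
              funext u; rw [neg_mul, mul_comm]]
            rw [integral_exp_neg_mul_Ioi hX]
            ring
    · have : Tendsto (fun X : ℝ => 2/X) atTop (nhds 0) := by
        simpa using tendsto_const_nhds.div_atTop (tendsto_id (α := ℝ))
      exact this
  have : Tendsto (fun X => π/2 - ∫ u in Ioi (0:ℝ),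
      Real.exp (-(u*X)) * (Real.cos X + u * Real.sin X)/(1+u^2)) atTop (nhds (π/2 - 0)) :=
    tendsto_const_nhds.sub herr
  rw [sub_zero] at this
  apply this.congr'
  filter_upwards [eventually_gt_atTop (0:ℝ)] with X hX
  exact (Si_eq X hX).symm

lemma abs_Si_le (x : ℝ) (hx : 0 ≤ x) : |Si x| ≤ x := by
  have h1 : ‖∫ t in (0:ℝ)..x, _root_.sinc t‖ ≤ 1 * |x - 0| :=
    intervalIntegral.norm_integral_le_of_norm_le_const (fun t _ => by
      simpa [Real.norm_eq_abs] using _root_.abs_sinc_le_one t)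
  rw [Si]
  simpa [Real.norm_eq_abs, abs_of_nonneg hx] using h1

lemma Si_bound : ∃ C : ℝ, 0 < C ∧ ∀ x : ℝ, 0 ≤ x → |Si x| ≤ C := by
  obtain ⟨A, hA⟩ := (Filter.eventually_atTop).mp
    (tendsto_Si.eventually (eventually_abs_sub_lt (π/2) one_pos))
  refine ⟨|A| + |π/2| + 1, by positivity, fun x hx => ?_⟩
  rcases le_or_gt x A with hxA | hxA
  · have := (abs_Si_le x hx).trans (hxA.trans (le_abs_self A))
    linarith [abs_nonneg (π/2 : ℝ)]
  · have h := hA x hxA.le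
    have : |Si x| ≤ |π/2| + 1 := by
      have h2 := abs_sub_abs_le_abs_sub (Si x) (π/2)
      have h3 : |Si x - π/2| < 1 := h
      linarith [le_abs_self (π/2 : ℝ), abs_nonneg (π/2:ℝ)]
    linarith [abs_nonneg A]

noncomputable def Dfun (ε s : ℝ) : ℝ := ∫ u in Ioo ε (1/ε), Real.sin (u*s)/u

lemma Dfun_eq (ε s : ℝ) (hε : 0 < ε) (hε1 : ε < 1) (hs : 0 < s) :
    Dfun ε s = Si (s/ε) - Si (ε*s) := by
  have hεle : ε ≤ 1/ε := by
    rw [le_div_iff₀ hε]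
    nlinarith
  have hs' : s ≠ 0 := ne_of_gt hs
  rw [Dfun, ← MeasureTheory.integral_Ioc_eq_integral_Ioo,
    ← intervalIntegral.integral_of_le hεle]
  have key : ∀ u : ℝ, Real.sin (u*s)/u = s * _root_.sinc (u*s) := by
    intro u
    rcases eq_or_ne u 0 with rfl | hu
    · simp [_root_.sinc]
    · rw [_root_.sinc]
      field_simp
  simp only [key]
  rw [intervalIntegral.integral_const_mul]
  rw [intervalIntegral.integral_comp_mul_right _root_.sinc hs']
  rw [smul_eq_mul, ← mul_assoc, mul_inv_cancel₀ hs', one_mul]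
  rw [← intervalIntegral.integral_interval_sub_left (sinc_intInt _ _) (sinc_intInt _ _)]
  rw [Si, Si, show s/ε = 1/ε*s from by ring]

lemma Dfun_zero (ε : ℝ) : Dfun ε 0 = 0 := by
  simp [Dfun]

lemma Dfun_bound {C : ℝ} (hCb : ∀ x : ℝ, 0 ≤ x → |Si x| ≤ C)
    {ε : ℝ} (hε : 0 < ε) (hε1 : ε < 1) {s : ℝ} (hs : 0 ≤ s) : |Dfun ε s| ≤ 2*C := by
  have hC0 : 0 ≤ C := by simpa [Si] using hCb 0 le_rfl
  rcases eq_or_lt_of_le hs with rfl | hs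
  · rw [Dfun_zero]
    simp
    linarith
  · rw [Dfun_eq ε s hε hε1 hs]
    have h1 := hCb (s/ε) (by positivity)
    have h2 := hCb (ε*s) (by positivity)
    calc |Si (s/ε) - Si (ε*s)| ≤ |Si (s/ε)| + |Si (ε*s)| := abs_sub _ _
    _ ≤ 2*C := by linarith

lemma Dfun_tendsto (s : ℝ) (hs : 0 < s) :
    Tendsto (fun ε => Dfun ε s) (nhdsWithin 0 (Ioi 0)) (nhds (π/2)) := by
  have h1 : Tendsto (fun ε : ℝ => Si (s/ε)) (nhdsWithin 0 (Ioi 0)) (nhds (π/2)) := by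
    apply tendsto_Si.comp
    exact (Tendsto.const_mul_atTop hs tendsto_inv_nhdsGT_zero).congr
      (fun ε => (div_eq_mul_inv s ε).symm)
  have h2 : Tendsto (fun ε : ℝ => Si (ε*s)) (nhdsWithin 0 (Ioi 0)) (nhds 0) := by
    apply squeeze_zero_norm' (a := fun ε : ℝ => ε*s)
    · filter_upwards [self_mem_nhdsWithin] with ε hε
      have hε' : (0:ℝ) < ε := hε
      exact abs_Si_le (ε*s) (by positivity)
    · have h3 : Tendsto (fun ε : ℝ => ε*s) (nhds 0) (nhds 0) := by
        simpa using (continuous_mul_right s).tendsto (0:ℝ)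
      exact h3.mono_left nhdsWithin_le_nhds
  have h4 := h1.sub h2
  rw [sub_zero] at h4
  apply h4.congr'
  filter_upwards [Ioo_mem_nhdsGT_of_mem (by norm_num : (0:ℝ) ∈ Ico 0 1)] with ε hε
  exact (Dfun_eq ε s hε.1 hε.2 hs).symm

lemma Dfun_cont {ε : ℝ} (hε : 0 < ε) : Continuous (fun s => Dfun ε s) := by
  apply MeasureTheory.continuous_of_dominated (bound := fun _ => ε⁻¹)
  · exact fun s => ((Real.measurable_sin.comp (measurable_id.mul_const s)).div
      measurable_id).aestronglyMeasurable
  · intro s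
    filter_upwards [ae_restrict_mem measurableSet_Ioo] with u hu
    have hu0 : 0 < u := lt_trans hε hu.1
    rw [Real.norm_eq_abs, abs_div]
    rw [div_le_iff₀ (abs_pos.mpr (ne_of_gt hu0))]
    calc |Real.sin (u*s)| ≤ 1 := Real.abs_sin_le_one _
    _ = ε⁻¹ * ε := by field_simp
    _ ≤ ε⁻¹ * |u| := by
        gcongr
        rw [abs_of_pos hu0]
        exact le_of_lt hu.1
  · exact (MeasureTheory.integrableOn_const measure_Ioo_lt_top.ne)
  · exact Eventually.of_forall (fun u => by fun_prop)
section Kernel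
variable (w s ε : ℝ)

lemma two_I_sin (z : ℂ) :
    Complex.exp (z*Complex.I) - Complex.exp (-(z*Complex.I)) = 2*Complex.I*Complex.sin z := by
  rw [Complex.sin]; ring_nf; rw [Complex.I_sq]; ring

lemma pointwise_sum (hu0 : 0 < u) :
    Complex.exp (-(Complex.I * ↑(w+u) * s))/(↑w - ↑(w+u))
      + Complex.exp (-(Complex.I * ↑(w+(-u)) * s))/(↑w - ↑(w+(-u)))
    = Complex.exp (-(Complex.I * w * s)) * (2*Complex.I*(Real.sin (u*s)/u : ℝ)) := by
  have hu : (u:ℂ) ≠ 0 := Complex.ofReal_ne_zero.mpr (ne_of_gt hu0)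
  push_cast
  have e1 : -(Complex.I*((w:ℂ)+u)*s) = -(Complex.I*w*s) + -(((u:ℂ)*s)*Complex.I) := by ring
  have e2 : -(Complex.I*((w:ℂ)+(-u))*s) = -(Complex.I*w*s) + ((u:ℂ)*s)*Complex.I := by ring
  rw [e1, e2, Complex.exp_add, Complex.exp_add]
  have e3 := two_I_sin ((u:ℂ)*s)
  have d1 : (w:ℂ) - ((w:ℂ)+(u:ℂ)) = -u := by ring
  have d2 : (w:ℂ) - ((w:ℂ)+(-(u:ℂ))) = u := by ring
  rw [d1, d2]
  rw [div_neg, neg_add_eq_sub, ← sub_div]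
  rw [show Complex.exp (-(Complex.I*(w:ℂ)*s)) * Complex.exp (((u:ℂ)*s)*Complex.I)
      - Complex.exp (-(Complex.I*(w:ℂ)*s)) * Complex.exp (-(((u:ℂ)*s)*Complex.I))
      = Complex.exp (-(Complex.I*(w:ℂ)*s)) * (2*Complex.I*Complex.sin ((u:ℂ)*s)) from by
    linear_combination Complex.exp (-(Complex.I*(w:ℂ)*s)) * e3]
  ring
end Kernel

lemma norm_exp_I_eq_one (a b : ℝ) : ‖Complex.exp (-(Complex.I * (a:ℂ) * (b:ℂ)))‖ = 1 := by
  rw [Complex.norm_exp]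
  simp

lemma g_meas (w s : ℝ) :
    Measurable (fun w' : ℝ => Complex.exp (-(Complex.I * (w':ℂ) * (s:ℂ))) / ((w:ℂ) - (w':ℂ))) :=
  (Complex.measurable_exp.comp
    (((Complex.measurable_ofReal.const_mul Complex.I).mul_const _).neg)).div
    (measurable_const.sub Complex.measurable_ofReal)

lemma norm_g_le (w s : ℝ) {x ε : ℝ} (hε : 0 < ε) (hx : ε < |w - x|) :
    ‖Complex.exp (-(Complex.I * (x:ℂ) * (s:ℂ))) / ((w:ℂ) - (x:ℂ))‖ ≤ ε⁻¹ := by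
  rw [norm_div, norm_exp_I_eq_one]
  rw [show ((w:ℂ) - (x:ℂ)) = ((w - x : ℝ) : ℂ) by push_cast; ring]
  rw [Complex.norm_real, Real.norm_eq_abs]
  rw [one_div]
  exact inv_anti₀ hε (le_of_lt hx)

lemma kernel_integral (w s : ℝ) {ε : ℝ} (hε : 0 < ε) (hε1 : ε < 1) :
    ∫ w' in {w' : ℝ | ε < |w - w'| ∧ |w - w'| < 1/ε},
      Complex.exp (-(Complex.I * (w':ℂ) * (s:ℂ))) / ((w:ℂ) - (w':ℂ))
    = Complex.exp (-(Complex.I * (w:ℂ) * (s:ℂ))) * (2*Complex.I*((Dfun ε s : ℝ) : ℂ)) := by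
  have h1ε : 0 < 1/ε := by positivity
  have hεlt : ε < 1/ε := by
    rw [lt_div_iff₀ hε]; nlinarith
  set g : ℝ → ℂ := fun w' => Complex.exp (-(Complex.I * (w':ℂ) * (s:ℂ))) / ((w:ℂ) - (w':ℂ)) with hgdef
  have hpre : (fun u => w + u) ⁻¹' {w' : ℝ | ε < |w - w'| ∧ |w - w'| < 1/ε}
      = Ioo ε (1/ε) ∪ Ioo (-(1/ε)) (-ε) := by
    ext u
    simp only [mem_preimage, mem_setOf_eq, mem_union, mem_Ioo,
      show w - (w + u) = -u by ring, abs_neg]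
    constructor
    · rintro ⟨h1, h2⟩
      rw [lt_abs] at h1
      rw [abs_lt] at h2
      rcases h1 with h1 | h1
      · exact Or.inl ⟨h1, h2.2⟩
      · exact Or.inr ⟨h2.1, by linarith⟩
    · rintro (⟨h1, h2⟩ | ⟨h1, h2⟩)
      · exact ⟨by rw [lt_abs]; exact Or.inl h1, by rw [abs_lt]; exact ⟨by linarith, h2⟩⟩
      · exact ⟨by rw [lt_abs]; exact Or.inr (by linarith), by rw [abs_lt]; exact ⟨h1, by linarith⟩⟩
  have hint1 : IntegrableOn (fun u => g (w + u)) (Ioo ε (1/ε)) := by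
    apply Measure.integrableOn_of_bounded (M := ε⁻¹) measure_Ioo_lt_top.ne
      ((g_meas w s).comp (measurable_const.add measurable_id)).aestronglyMeasurable
    filter_upwards [ae_restrict_mem measurableSet_Ioo] with u hu
    refine norm_g_le w s hε ?_
    show ε < |w - (w + u)|
    rw [show w - (w+u) = -u by ring, abs_neg, abs_of_pos (lt_trans hε hu.1)]
    exact hu.1
  have hint2 : IntegrableOn (fun u => g (w + u)) (Ioo (-(1/ε)) (-ε)) := by
    apply Measure.integrableOn_of_bounded (M := ε⁻¹) measure_Ioo_lt_top.ne
      ((g_meas w s).comp (measurable_const.add measurable_id)).aestronglyMeasurable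
    filter_upwards [ae_restrict_mem measurableSet_Ioo] with u hu
    refine norm_g_le w s hε ?_
    show ε < |w - (w + u)|
    rw [show w - (w+u) = -u by ring, abs_neg, abs_of_neg (lt_trans hu.2 (neg_neg_iff_pos.mpr hε))]
    linarith [hu.2]
  have hint3 : IntegrableOn (fun u => g (w + (-u))) (Ioo ε (1/ε)) := by
    apply Measure.integrableOn_of_bounded (M := ε⁻¹) measure_Ioo_lt_top.ne
      ((g_meas w s).comp (measurable_const.add measurable_id.neg)).aestronglyMeasurable
    filter_upwards [ae_restrict_mem measurableSet_Ioo] with u hu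
    refine norm_g_le w s hε ?_
    show ε < |w - (w + (-u))|
    rw [show w - (w+(-u)) = u by ring, abs_of_pos (lt_trans hε hu.1)]
    exact hu.1
  have htrans := (measurePreserving_add_left volume w).setIntegral_preimage_emb
      (MeasurableEquiv.addLeft w).measurableEmbedding g
      {w' : ℝ | ε < |w - w'| ∧ |w - w'| < 1/ε}
  rw [← htrans, hpre]
  have hdisj : Disjoint (Ioo ε (1/ε)) (Ioo (-(1/ε)) (-ε)) := by
    apply Set.disjoint_left.mpr
    rintro u ⟨h1, _⟩ ⟨_, h4⟩
    linarith
  rw [MeasureTheory.setIntegral_union hdisj measurableSet_Ioo hint1 hint2]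
  have hneg : ∫ u in Ioo (-(1/ε)) (-ε), g (w + u) = ∫ u in Ioo ε (1/ε), g (w + (-u)) := by
    have hres := (Measure.measurePreserving_neg (volume : Measure ℝ)).setIntegral_preimage_emb
      (MeasurableEquiv.neg ℝ).measurableEmbedding (fun u => g (w + u)) (Ioo (-(1/ε)) (-ε))
    rw [show (Neg.neg : ℝ → ℝ) ⁻¹' (Ioo (-(1/ε)) (-ε)) = Ioo ε (1/ε) by
      ext x
      simp only [mem_preimage, mem_Ioo]
      constructor <;> (rintro ⟨h1, h2⟩; constructor <;> linarith)] at hres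
    exact hres.symm
  rw [hneg, ← MeasureTheory.integral_add hint1 hint3]
  have hcongr : ∫ u in Ioo ε (1/ε), (g (w + u) + g (w + (-u)))
      = ∫ u in Ioo ε (1/ε), Complex.exp (-(Complex.I * (w:ℂ) * (s:ℂ)))
          * (2*Complex.I*((Real.sin (u*s)/u : ℝ) : ℂ)) :=
    MeasureTheory.setIntegral_congr_fun measurableSet_Ioo
      (fun u hu => pointwise_sum w s (lt_trans hε hu.1))
  rw [hcongr, MeasureTheory.integral_const_mul, MeasureTheory.integral_const_mul,
    Dfun]
  congr 2
  exact integral_ofReal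

/-- If `h` is integrable and square-integrable, `0 ≤ T ≤ T₀` and `h t = 0`
for `t < T₀`, then the shifted transfer function `w ↦ e^{i w T} H(w)` is
causal: for almost every real `w`, the principal-value integral exists and
`e^{i w T} H(w) = (1/(π i)) · p.v.∫ e^{i w' T} H(w')/(w − w') dw'`. -/
theorem stmt_7 (h : ℝ → ℂ) (hInt : Integrable h) (hL2 : MemLp h 2 (volume : Measure ℝ))
    (T₀ : ℝ) (hT₀ : 0 ≤ T₀) (hc : ∀ t : ℝ, t < T₀ → h t = 0)
    (H : ℝ → ℂ)
    (hH : ∀ w : ℝ, H w = ∫ t : ℝ, h t * Complex.exp (-(Complex.I * w * t)))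
    (T : ℝ) (hT0 : 0 ≤ T) (hTT₀ : T ≤ T₀) :
    ∀ᵐ w : ℝ, ∃ L : ℂ,
      Tendsto (fun ε : ℝ =>
          ∫ w' in {w' : ℝ | ε < |w - w'| ∧ |w - w'| < 1 / ε},
            Complex.exp (Complex.I * w' * T) * H w' / (w - w'))
        (nhdsWithin 0 (Set.Ioi 0)) (nhds L) ∧
      Complex.exp (Complex.I * w * T) * H w = 1 / (Real.pi * Complex.I) * L := by
  have hπI : (Real.pi : ℂ) * Complex.I ≠ 0 := by
    simp [Real.pi_ne_zero, Complex.I_ne_zero]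
  obtain ⟨C, hC, hCb⟩ := Si_bound
  set e : ℝ → ℝ → ℂ := fun a t => Complex.exp (-(Complex.I * (a:ℂ) * ((t - T : ℝ) : ℂ))) with he
  have hHval : ∀ w' : ℝ, Complex.exp (Complex.I * (w':ℂ) * (T:ℂ)) * H w'
      = ∫ t : ℝ, h t * e w' t := by
    intro w'
    rw [hH w', ← MeasureTheory.integral_const_mul]
    congr 1
    funext t
    simp only [he]
    rw [show -(Complex.I * (w':ℂ) * ((t - T : ℝ) : ℂ))
        = Complex.I * (w':ℂ) * (T:ℂ) + -(Complex.I * (w':ℂ) * (t:ℂ)) by push_cast; ring]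
    rw [Complex.exp_add]
    ring
  have hInt_mul : ∀ a : ℝ, Integrable (fun t => h t * e a t) := by
    intro a
    apply (hInt.bdd_mul (c := 1) (Continuous.aestronglyMeasurable (by fun_prop))
      (Eventually.of_forall fun t => le_of_eq (norm_exp_I_eq_one a (t - T)))).congr
    exact Eventually.of_forall (fun t => mul_comm _ _)
  refine Eventually.of_forall (fun w => ?_)
  refine ⟨(Real.pi : ℂ) * Complex.I * (Complex.exp (Complex.I * (w:ℂ) * (T:ℂ)) * H w), ?_, by
    field_simp⟩
  -- step 1: representation of truncated integral
  have E1 : ∀ ε : ℝ, 0 < ε → ε < 1 →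
      (∫ w' in {w' : ℝ | ε < |w - w'| ∧ |w - w'| < 1 / ε},
        Complex.exp (Complex.I * (w':ℂ) * (T:ℂ)) * H w' / ((w:ℂ) - (w':ℂ)))
      = ∫ t in Ioi T₀, h t * (e w t * (2 * Complex.I * ((Dfun ε (t - T) : ℝ) : ℂ))) := by
    intro ε hε hε1
    set A : Set ℝ := {w' : ℝ | ε < |w - w'| ∧ |w - w'| < 1 / ε} with hA
    have hAmeas : MeasurableSet A := by
      have : A = (fun w' => |w - w'|) ⁻¹' (Ioo ε (1/ε)) := by
        ext x; simp [hA, mem_Ioo]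
      rw [this]
      exact ((measurable_const.sub measurable_id).abs) measurableSet_Ioo
    have hAfin : volume A ≠ ⊤ := by
      apply ne_of_lt
      apply lt_of_le_of_lt (measure_mono (fun x hx => ?_)) (measure_closedBall_lt_top (x := w) (r := 1/ε))
      rw [Metric.mem_closedBall, Real.dist_eq, abs_sub_comm]
      exact le_of_lt hx.2
    -- rewrite integrand pointwise
    have hfun : (fun w' : ℝ => Complex.exp (Complex.I * (w':ℂ) * (T:ℂ)) * H w' / ((w:ℂ) - (w':ℂ)))
        = fun w' : ℝ => ∫ t : ℝ, h t * e w' t / ((w:ℂ) - (w':ℂ)) := by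
      funext w'
      rw [hHval w', ← integral_div]
    rw [hfun]
    -- Fubini
    have hPmeas : AEStronglyMeasurable
        (Function.uncurry fun w' t => h t * e w' t / ((w:ℂ) - (w':ℂ)))
        ((volume.restrict A).prod volume) := by
      have hre : (Function.uncurry fun w' t => h t * e w' t / ((w:ℂ) - (w':ℂ)))
          = fun p : ℝ × ℝ => (h p.2 * e p.1 p.2) * (((w:ℂ) - (p.1:ℂ))⁻¹) := by
        funext p
        simp [Function.uncurry, div_eq_mul_inv]
      rw [hre]
      exact ((hInt.1.comp_snd.mul (Continuous.aestronglyMeasurable (by fun_prop))).mul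
        ((measurable_const.sub (Complex.measurable_ofReal.comp measurable_fst)).inv).aestronglyMeasurable)
    have hP : Integrable (Function.uncurry fun w' t => h t * e w' t / ((w:ℂ) - (w':ℂ)))
        ((volume.restrict A).prod volume) := by
      rw [MeasureTheory.integrable_prod_iff hPmeas]
      simp only [Function.uncurry_apply_pair]
      constructor
      · exact Eventually.of_forall (fun w' => (hInt_mul w').div_const _)
      · apply Integrable.mono' (g := fun _ => (∫ t : ℝ, ‖h t‖) * ε⁻¹)
          (MeasureTheory.integrableOn_const hAfin)
          (hPmeas.norm.integral_prod_right')
        filter_upwards [ae_restrict_mem hAmeas] with w' hw'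
        rw [Real.norm_eq_abs, abs_of_nonneg (integral_nonneg (fun t => norm_nonneg _))]
        have hptwise : ∀ t : ℝ, ‖h t * e w' t / ((w:ℂ) - (w':ℂ))‖ ≤ ‖h t‖ * ε⁻¹ := by
          intro t
          rw [norm_div, norm_mul, he, norm_exp_I_eq_one, mul_one]
          rw [show ((w:ℂ) - (w':ℂ)) = ((w - w' : ℝ) : ℂ) by push_cast; ring,
            Complex.norm_real, Real.norm_eq_abs, div_eq_mul_inv]
          gcongr
          exact le_of_lt hw'.1
        calc (∫ t : ℝ, ‖h t * e w' t / ((w:ℂ) - (w':ℂ))‖)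
            ≤ ∫ t : ℝ, ‖h t‖ * ε⁻¹ :=
              integral_mono ((hInt_mul w').div_const _).norm (hInt.norm.mul_const _) hptwise
        _ = (∫ t : ℝ, ‖h t‖) * ε⁻¹ := MeasureTheory.integral_mul_const _ _
    have hswap := MeasureTheory.integral_integral_swap hP
    rw [hswap]
    -- inner integral via kernel_integral
    have hinner : (fun t : ℝ => ∫ w' in A, h t * e w' t / ((w:ℂ) - (w':ℂ)))
        = fun t : ℝ => h t * (e w t * (2 * Complex.I * ((Dfun ε (t - T) : ℝ) : ℂ))) := by
      funext t
      rw [show (fun w' : ℝ => h t * e w' t / ((w:ℂ) - (w':ℂ)))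
          = fun w' : ℝ => h t * (e w' t / ((w:ℂ) - (w':ℂ))) by
        funext w'; rw [mul_div_assoc]]
      rw [MeasureTheory.integral_const_mul]
      rw [he]
      rw [kernel_integral w (t - T) hε hε1]
    rw [hinner]
    -- restrict to Ioi T₀
    rw [← MeasureTheory.integral_Ici_eq_integral_Ioi,
      MeasureTheory.setIntegral_eq_integral_of_forall_compl_eq_zero
        (fun t ht => by rw [hc t (by simpa using ht)]; ring)]
  -- step 2: dominated convergence
  have hDCT : Tendsto
      (fun ε : ℝ => ∫ t in Ioi T₀, h t * (e w t * (2 * Complex.I * ((Dfun ε (t - T) : ℝ) : ℂ))))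
      (nhdsWithin 0 (Set.Ioi 0))
      (nhds ((Real.pi : ℂ) * Complex.I * (Complex.exp (Complex.I * (w:ℂ) * (T:ℂ)) * H w))) := by
    have hlimit_eq : (∫ t in Ioi T₀, h t * (e w t * (2 * Complex.I * ((π/2 : ℝ) : ℂ))))
        = (Real.pi : ℂ) * Complex.I * (Complex.exp (Complex.I * (w:ℂ) * (T:ℂ)) * H w) := by
      rw [show (fun t : ℝ => h t * (e w t * (2 * Complex.I * ((π/2 : ℝ) : ℂ))))
          = fun t : ℝ => ((Real.pi : ℂ) * Complex.I) * (h t * e w t) by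
        funext t; push_cast; ring]
      rw [MeasureTheory.integral_const_mul]
      have hHw : Complex.exp (Complex.I * (w:ℂ) * (T:ℂ)) * H w = ∫ t in Ioi T₀, h t * e w t := by
        rw [hHval w]
        rw [← MeasureTheory.setIntegral_eq_integral_of_forall_compl_eq_zero
          (s := Ici T₀) (f := fun t => h t * e w t)
          (fun t ht => by show h t * e w t = 0; rw [hc t (by simpa using ht)]; ring)]
        exact MeasureTheory.integral_Ici_eq_integral_Ioi
      rw [hHw]
    rw [← hlimit_eq]
    apply MeasureTheory.tendsto_integral_filter_of_dominated_convergence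
      (bound := fun t => ‖h t‖ * (4*C))
    · filter_upwards [Ioo_mem_nhdsGT_of_mem (by norm_num : (0:ℝ) ∈ Ico 0 1)] with ε hε
      apply AEStronglyMeasurable.restrict
      refine hInt.1.mul (Continuous.aestronglyMeasurable ?_)
      apply Continuous.mul (by fun_prop)
      apply Continuous.mul continuous_const
      exact Complex.continuous_ofReal.comp ((Dfun_cont hε.1).comp (continuous_sub_right T))
    · filter_upwards [Ioo_mem_nhdsGT_of_mem (by norm_num : (0:ℝ) ∈ Ico 0 1)] with ε hε
      filter_upwards [ae_restrict_mem measurableSet_Ioi] with t ht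
      have hs : (0:ℝ) ≤ t - T := by
        simp only [mem_Ioi] at ht
        linarith
      rw [norm_mul, norm_mul, he, norm_exp_I_eq_one, one_mul, norm_mul]
      rw [show ‖(2:ℂ) * Complex.I‖ = 2 by
        rw [norm_mul, Complex.norm_I, mul_one]; simp]
      rw [Complex.norm_real, Real.norm_eq_abs]
      have := Dfun_bound hCb hε.1 hε.2 hs
      calc ‖h t‖ * (2 * |Dfun ε (t - T)|) ≤ ‖h t‖ * (2 * (2*C)) := by gcongr
      _ = ‖h t‖ * (4*C) := by ring
    · exact (hInt.norm.mul_const _).restrict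
    · filter_upwards [ae_restrict_mem measurableSet_Ioi] with t ht
      have hs : (0:ℝ) < t - T := by
        simp only [mem_Ioi] at ht
        linarith
      apply Tendsto.const_mul
      apply Tendsto.const_mul
      apply Tendsto.const_mul
      exact (Complex.continuous_ofReal.tendsto _).comp (Dfun_tendsto (t - T) hs)
  -- conclude
  apply hDCT.congr'
  filter_upwards [Ioo_mem_nhdsGT_of_mem (by norm_num : (0:ℝ) ∈ Ico 0 1)] with ε hε
  exact (E1 ε hε.1 hε.2).symm
end

section
/- For every real w, ∫₀^∞ e^{-i w t} e^{-t²/4} dt = √π · e^{-w²} − 2 i · D(w), where D(w) = e^{-w²} ∫₀^w e^{t²} dt is Dawson's integral. Equivalently, the transfer function H̃(w) = e^{-w²} − (2 i/√π) D(w) is the Fourier transform of the causal function t ↦ (1/√π) e^{-t²/4}·1_{t ≥ 0}. -/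
open MeasureTheory Filter Set Complex

noncomputable section

namespace Stmt9Aux

/-- Norm of the shifted Gaussian. -/
lemma norm_aux (u x : ℝ) :
    ‖Complex.exp (-((u : ℂ) + (x : ℂ) * Complex.I) ^ 2)‖ = Real.exp (x ^ 2 - u ^ 2) := by
  rw [Complex.norm_exp]
  congr 1
  simp [pow_two, Complex.mul_re, Complex.add_re, Complex.add_im]
  try ring

/-- Derivative of the complex shifted Gaussian. -/
lemma hasDerivAt_cexp_affine (c d z : ℂ) :
    HasDerivAt (fun z : ℂ => Complex.exp (-(c + z * d) ^ 2))
      (-2 * (c + z * d) * d * Complex.exp (-(c + z * d) ^ 2)) z := by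
  have h : HasDerivAt (fun z : ℂ => c + z * d) d z := by
    simpa using ((hasDerivAt_id z).mul_const d).const_add c
  have h2 := ((h.fun_pow 2).fun_neg).cexp
  refine h2.congr_deriv ?_
  norm_num
  ring

lemma integrableOn_shifted (x : ℝ) :
    IntegrableOn (fun u : ℝ => Complex.exp (-((u : ℂ) + (x : ℂ) * Complex.I) ^ 2)) (Ioi 0) := by
  have h := GaussianFourier.integrable_cexp_neg_mul_sq_add_real_mul_I (b := 1) (by norm_num) x
  simpa using h.integrableOn

/-- Bound integrability. -/
lemma integrable_bound (c : ℝ) :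
    Integrable (fun u : ℝ => 2 * (|u| + c) * Real.exp (c ^ 2 - u ^ 2)) := by
  have h1 : Integrable (fun u : ℝ => u * Real.exp (-1 * u ^ 2)) :=
    integrable_mul_exp_neg_mul_sq one_pos
  have h1' : Integrable (fun u : ℝ => |u| * Real.exp (-1 * u ^ 2)) := by
    have := h1.abs
    refine this.congr ?_
    filter_upwards with u
    rw [abs_mul, _root_.abs_of_nonneg (Real.exp_pos _).le]
  have h2 : Integrable (fun u : ℝ => Real.exp (-1 * u ^ 2)) :=
    integrable_exp_neg_mul_sq one_pos
  have h3 : Integrable (fun u : ℝ => (|u| + c) * Real.exp (-1 * u ^ 2)) := by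
    have h12 := h1'.add (h2.const_mul c)
    simpa [add_mul, Pi.add_def] using h12
  have h4 := (h3.const_mul (2 * Real.exp (c ^ 2)))
  refine h4.congr ?_
  filter_upwards with u
  rw [sub_eq_add_neg, Real.exp_add]
  ring_nf

lemma norm_deriv_le (x u : ℝ) :
    ‖(-2 : ℂ) * ((u : ℂ) + (x : ℂ) * Complex.I) *
        Complex.exp (-((u : ℂ) + (x : ℂ) * Complex.I) ^ 2)‖
      ≤ 2 * (|u| + |x|) * Real.exp (x ^ 2 - u ^ 2) := by
  rw [norm_mul, norm_mul, norm_aux]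
  have h1 : ‖(-2 : ℂ)‖ = 2 := by norm_num
  rw [h1]
  have h2 : ‖(u : ℂ) + (x : ℂ) * Complex.I‖ ≤ |u| + |x| := by
    refine (norm_add_le _ _).trans ?_
    simp [Complex.norm_real]
  have := Real.exp_pos (x ^ 2 - u ^ 2)
  nlinarith [abs_nonneg u, abs_nonneg x]

/-- The key derivative-under-integral step together with FTC on `Ioi 0`. -/
lemma hasDerivAt_G (x₀ : ℝ) :
    HasDerivAt (fun x : ℝ => ∫ u in Ioi (0 : ℝ), Complex.exp (-((u : ℂ) + (x : ℂ) * Complex.I) ^ 2))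
      (-Complex.I * Complex.exp ((x₀ : ℂ) ^ 2)) x₀ := by
  set F : ℝ → ℝ → ℂ := fun x u => Complex.exp (-((u : ℂ) + (x : ℂ) * Complex.I) ^ 2) with hF
  set F' : ℝ → ℝ → ℂ := fun x u =>
    (-2 : ℂ) * ((u : ℂ) + (x : ℂ) * Complex.I) * Complex.I * Complex.exp
      (-((u : ℂ) + (x : ℂ) * Complex.I) ^ 2) with hF'
  set c : ℝ := |x₀| + 1 with hc
  have hnormF' : ∀ x u : ℝ, ‖F' x u‖ = ‖(-2 : ℂ) * ((u : ℂ) + (x : ℂ) * Complex.I) *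
      Complex.exp (-((u : ℂ) + (x : ℂ) * Complex.I) ^ 2)‖ := by
    intro x u
    have : F' x u = ((-2 : ℂ) * ((u : ℂ) + (x : ℂ) * Complex.I) *
        Complex.exp (-((u : ℂ) + (x : ℂ) * Complex.I) ^ 2)) * Complex.I := by
      simp only [hF']; ring
    rw [this, norm_mul, Complex.norm_I, mul_one]
  have key := hasDerivAt_integral_of_dominated_loc_of_deriv_le (μ := volume.restrict (Ioi 0))
    (F := F) (F' := F') (x₀ := x₀) (bound := fun u => 2 * (|u| + c) * Real.exp (c ^ 2 - u ^ 2))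
    (Metric.ball_mem_nhds x₀ one_pos) ?_ ?_ ?_ ?_ ?_ ?_
  · -- now compute ∫ u in Ioi 0, F' x₀ u
    have hint : ∫ u in Ioi (0 : ℝ), F' x₀ u = -Complex.I * Complex.exp ((x₀ : ℂ) ^ 2) := by
      have hderiv : ∀ u ∈ Ici (0 : ℝ), HasDerivAt (fun u : ℝ => F x₀ u)
          ((-2 : ℂ) * ((u : ℂ) + (x₀ : ℂ) * Complex.I) *
            Complex.exp (-((u : ℂ) + (x₀ : ℂ) * Complex.I) ^ 2)) u := by
        intro u _
        have h := hasDerivAt_cexp_affine ((x₀ : ℂ) * Complex.I) 1 (u : ℂ)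
        have h2 := HasDerivAt.comp_ofReal (z := u) (by simpa [add_comm, mul_one] using h)
        simpa [add_comm, mul_one] using h2
      have f'int : IntegrableOn (fun u : ℝ =>
          (-2 : ℂ) * ((u : ℂ) + (x₀ : ℂ) * Complex.I) *
            Complex.exp (-((u : ℂ) + (x₀ : ℂ) * Complex.I) ^ 2)) (Ioi 0) := by
        refine ((integrable_bound |x₀|).restrict (s := Ioi 0)).mono'
          (Continuous.aestronglyMeasurable (by continuity)) ?_
        filter_upwards with u
        rw [_root_.sq_abs]
        exact norm_deriv_le x₀ u
      have htend : Tendsto (fun u : ℝ => F x₀ u) atTop (nhds 0) := by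
        rw [tendsto_zero_iff_norm_tendsto_zero]
        have heq : (fun u : ℝ => ‖F x₀ u‖) = fun u => Real.exp (x₀ ^ 2 - u ^ 2) := by
          ext u; exact norm_aux u x₀
        rw [heq]
        apply Real.tendsto_exp_atBot.comp
        have : Tendsto (fun u : ℝ => u ^ 2) atTop atTop :=
          tendsto_pow_atTop two_ne_zero
        simpa [sub_eq_add_neg] using tendsto_atBot_add_const_left atTop (x₀ ^ 2)
          (tendsto_neg_atBot_iff.mpr this)
      have := integral_Ioi_of_hasDerivAt_of_tendsto' hderiv f'int htend
      have hF0 : F x₀ 0 = Complex.exp ((x₀ : ℂ) ^ 2) := by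
        simp only [hF, Complex.ofReal_zero, zero_add, mul_pow, Complex.I_sq]
        ring_nf
      rw [hF0] at this
      calc ∫ u in Ioi (0 : ℝ), F' x₀ u
          = ∫ u in Ioi (0 : ℝ), Complex.I * ((-2 : ℂ) * ((u : ℂ) + (x₀ : ℂ) * Complex.I) *
              Complex.exp (-((u : ℂ) + (x₀ : ℂ) * Complex.I) ^ 2)) := by
            congr 1; ext u; simp only [hF']; ring
        _ = Complex.I * ∫ u in Ioi (0 : ℝ), (-2 : ℂ) * ((u : ℂ) + (x₀ : ℂ) * Complex.I) *
              Complex.exp (-((u : ℂ) + (x₀ : ℂ) * Complex.I) ^ 2) := integral_const_mul _ _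
        _ = Complex.I * (0 - Complex.exp ((x₀ : ℂ) ^ 2)) := by rw [this]
        _ = -Complex.I * Complex.exp ((x₀ : ℂ) ^ 2) := by ring
    rw [← hint]
    exact key.2
  · filter_upwards with x
    exact (Continuous.aestronglyMeasurable (by continuity))
  · exact integrableOn_shifted x₀
  · exact (Continuous.aestronglyMeasurable (by continuity))
  · -- bound
    filter_upwards with u
    intro x hx
    have hxc : |x| ≤ c := by
      have h := mem_ball_iff_norm.mp hx
      rw [Real.norm_eq_abs] at h
      have : |x| - |x₀| ≤ 1 := (abs_sub_abs_le_abs_sub x x₀).trans h.le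
      simp only [hc]; linarith
    rw [hnormF']
    refine (norm_deriv_le x u).trans ?_
    have hexp : Real.exp (x ^ 2 - u ^ 2) ≤ Real.exp (c ^ 2 - u ^ 2) := by
      apply Real.exp_le_exp.mpr
      have : x ^ 2 ≤ c ^ 2 := by nlinarith [abs_nonneg x, _root_.sq_abs x, _root_.sq_abs c]
      linarith
    have h2 : 2 * (|u| + |x|) ≤ 2 * (|u| + c) := by linarith
    exact mul_le_mul h2 hexp (Real.exp_pos _).le (by positivity)
  · exact (integrable_bound c).restrict
  · filter_upwards with u
    intro x hx
    have h := hasDerivAt_cexp_affine (u : ℂ) Complex.I (x : ℂ)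
    have h2 := HasDerivAt.comp_ofReal (z := x) h
    simpa [hF, hF'] using h2

/-- Value of the shifted Gaussian integral. -/
lemma G_eq (w : ℝ) :
    ∫ u in Ioi (0 : ℝ), Complex.exp (-((u : ℂ) + (w : ℂ) * Complex.I) ^ 2)
      = ((Real.sqrt Real.pi / 2 : ℝ) : ℂ) -
        Complex.I * ((∫ s in (0 : ℝ)..w, Real.exp (s ^ 2) : ℝ) : ℂ) := by
  have hFTC := intervalIntegral.integral_eq_sub_of_hasDerivAt
    (f := fun x : ℝ => ∫ u in Ioi (0 : ℝ), Complex.exp (-((u : ℂ) + (x : ℂ) * Complex.I) ^ 2))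
    (f' := fun x : ℝ => -Complex.I * Complex.exp ((x : ℂ) ^ 2))
    (a := 0) (b := w) (fun s _ => hasDerivAt_G s)
    ((Continuous.intervalIntegrable (by continuity) _ _))
  have hG0 : (∫ u in Ioi (0 : ℝ), Complex.exp (-((u : ℂ) + ((0 : ℝ) : ℂ) * Complex.I) ^ 2))
      = ((Real.sqrt Real.pi / 2 : ℝ) : ℂ) := by
    have hpt : ∀ u : ℝ, Complex.exp (-((u : ℂ) + ((0 : ℝ) : ℂ) * Complex.I) ^ 2)
        = ((Real.exp (-u ^ 2) : ℝ) : ℂ) := by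
      intro u
      rw [Complex.ofReal_exp]
      congr 1
      push_cast
      ring
    simp_rw [hpt]
    have h : (∫ u in Ioi (0 : ℝ), Real.exp (-u ^ 2)) = Real.sqrt Real.pi / 2 := by
      have h := integral_gaussian_Ioi 1
      simpa using h
    rw [← h]
    exact integral_ofReal
  have hval : ∫ s in (0 : ℝ)..w, -Complex.I * Complex.exp ((s : ℂ) ^ 2)
      = -Complex.I * ((∫ s in (0 : ℝ)..w, Real.exp (s ^ 2) : ℝ) : ℂ) := by
    rw [intervalIntegral.integral_const_mul]
    congr 1
    have hpt : ∀ s : ℝ, Complex.exp ((s : ℂ) ^ 2) = ((Real.exp (s ^ 2) : ℝ) : ℂ) := by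
      intro s; rw [Complex.ofReal_exp]; norm_cast
    simp_rw [hpt]
    exact intervalIntegral.integral_ofReal
  rw [hval, hG0] at hFTC
  linear_combination -hFTC

end Stmt9Aux

end

/-- For every real `w`,
`∫₀^∞ e^{-i w t} e^{-t²/4} dt = √π · e^{-w²} − 2 i · D(w)` where
`D(w) = e^{-w²} ∫₀^w e^{t²} dt` is Dawson's integral; equivalently the
transfer function `H̃(w) = e^{-w²} − (2 i/√π) D(w)` is the Fourier
transform of the causal function `t ↦ (1/√π) e^{-t²/4}·1_{t ≥ 0}`. -/
theorem stmt_9 (w : ℝ) :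
    ∫ t in Set.Ioi (0 : ℝ),
        Complex.exp (-(Complex.I * w * t)) * (Real.exp (-t ^ 2 / 4) : ℂ) =
      (Real.sqrt Real.pi : ℂ) * (Real.exp (-w ^ 2) : ℂ) -
        2 * Complex.I * ((Real.exp (-w ^ 2) * ∫ t in (0 : ℝ)..w, Real.exp (t ^ 2) : ℝ) : ℂ) := by
  classical
  set g : ℝ → ℂ := fun u => Complex.exp (-((u : ℂ) + (w : ℂ) * Complex.I) ^ 2) with hg
  have hpt : ∀ t : ℝ, Complex.exp (-(Complex.I * w * t)) * (Real.exp (-t ^ 2 / 4) : ℂ)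
      = Complex.exp (-((w : ℂ) ^ 2)) * g ((1 / 2) * t) := by
    intro t
    rw [hg]
    rw [Complex.ofReal_exp, ← Complex.exp_add, ← Complex.exp_add]
    congr 1
    push_cast
    linear_combination (w : ℂ) ^ 2 * Complex.I_sq
  calc ∫ t in Set.Ioi (0 : ℝ),
        Complex.exp (-(Complex.I * w * t)) * (Real.exp (-t ^ 2 / 4) : ℂ)
      = ∫ t in Set.Ioi (0 : ℝ), Complex.exp (-((w : ℂ) ^ 2)) * g ((1 / 2) * t) := by
        simp_rw [hpt]
    _ = Complex.exp (-((w : ℂ) ^ 2)) * ∫ t in Set.Ioi (0 : ℝ), g ((1 / 2) * t) :=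
        integral_const_mul _ _
    _ = Complex.exp (-((w : ℂ) ^ 2)) * (((1 / 2 : ℝ))⁻¹ •
          ∫ u in Set.Ioi ((1 / 2 : ℝ) * 0), g u) := by
        rw [integral_comp_mul_left_Ioi g 0 (by norm_num : (0:ℝ) < 1/2)]
    _ = Complex.exp (-((w : ℂ) ^ 2)) * ((2 : ℝ) • ∫ u in Set.Ioi (0 : ℝ), g u) := by
        norm_num
    _ = (Real.sqrt Real.pi : ℂ) * (Real.exp (-w ^ 2) : ℂ) -
        2 * Complex.I * ((Real.exp (-w ^ 2) * ∫ t in (0 : ℝ)..w, Real.exp (t ^ 2) : ℝ) : ℂ) := by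
        rw [hg, Stmt9Aux.G_eq w]
        have hw : Complex.exp (-((w : ℂ) ^ 2)) = ((Real.exp (-w ^ 2) : ℝ) : ℂ) := by
          rw [Complex.ofReal_exp]; norm_cast
        rw [hw, Complex.real_smul]
        push_cast
        ring
end

section
/- For every real w, the Hilbert transform of the Gaussian equals (2/√π) times Dawson's integral: the limit as ε → 0⁺ of (1/π) ∫_{|w − w'| > ε} e^{-w'²}/(w − w') dw' exists and equals (2/√π) · D(w), where D(w) = e^{-w²} ∫₀^w e^{t²} dt. Consequently the transfer function H̃(w) = e^{-w²} − (2 i/√π) D(w) satisfies the Kramers–Krönig relation Im H̃ = −H[Re H̃] and is causal. -/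
open MeasureTheory Filter Set
noncomputable def hilbK (w u : ℝ) : ℝ := (Real.exp (-(w-u)^2) - Real.exp (-(w+u)^2))/u
noncomputable def hilbF (x u : ℝ) : ℝ :=
  Real.exp (-u^2) * ((Real.exp (2*x*u) - Real.exp (-(2*x*u)))/u)
noncomputable def hilbF' (x u : ℝ) : ℝ :=
  Real.exp (-u^2) * (2*(Real.exp (2*x*u) + Real.exp (-(2*x*u))))
noncomputable def hilbG (x : ℝ) : ℝ := ∫ u in Ioi (0:ℝ), hilbF x u

lemma hilb_integrable_gauss : Integrable (fun x : ℝ => Real.exp (-x^2)) := by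
  simpa [neg_mul, one_mul] using integrable_exp_neg_mul_sq (one_pos)

lemma hilb_integrable_quad (c : ℝ) : Integrable (fun u : ℝ => Real.exp (-u^2 + c*u)) := by
  have h : ∀ u : ℝ, Real.exp (-u^2 + c*u) = Real.exp (c^2/4) * Real.exp (-(u - c/2)^2) := by
    intro u; rw [← Real.exp_add]; ring_nf
  have : Integrable (fun u : ℝ => Real.exp (-(u - c/2)^2)) :=
    hilb_integrable_gauss.comp_sub_right (c/2)
  simpa [h] using this.const_mul (Real.exp (c^2/4))

lemma hilb_integral_quad (c : ℝ) :
    ∫ u : ℝ, Real.exp (-u^2 + c*u) = Real.sqrt Real.pi * Real.exp (c^2/4) := by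
  have h : ∀ u : ℝ, Real.exp (-u^2 + c*u) = Real.exp (c^2/4) * Real.exp (-(u - c/2)^2) := by
    intro u; rw [← Real.exp_add]; ring_nf
  simp_rw [h]
  rw [integral_const_mul, integral_sub_right_eq_self (fun u : ℝ => Real.exp (-u^2)) (c/2)]
  have : ∫ u : ℝ, Real.exp (-u^2) = Real.sqrt Real.pi := by
    simpa [neg_mul, one_mul] using integral_gaussian 1
  rw [this]; ring

lemma hilb_gauss_shift (w : ℝ) : Integrable (fun u : ℝ => Real.exp (-(w-u)^2)) := by
  have h := hilb_integrable_gauss.comp_sub_right w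
  refine h.congr (Eventually.of_forall fun u => ?_)
  have : (u - w)^2 = (w - u)^2 := by ring
  simp [this]

lemma hilb_gauss_shift' (w : ℝ) : Integrable (fun u : ℝ => Real.exp (-(w+u)^2)) := by
  have h := hilb_gauss_shift (-w)
  refine h.congr (Eventually.of_forall fun u => ?_)
  have : (-w - u)^2 = (w + u)^2 := by ring
  simp [this]

/-- `|e^a - e^{-a}| ≤ 2|a| e^{|a|}`. -/
lemma hilb_exp_sub_bound (a : ℝ) :
    |Real.exp a - Real.exp (-a)| ≤ 2*|a| *Real.exp (|a|) := by
  have key : ∀ b : ℝ, 0 ≤ b → Real.exp b - Real.exp (-b) ≤ 2*b*Real.exp b := by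
    intro b hb
    have h1 : Real.exp (-(2*b)) ≥ 1 - 2*b := by
      have := Real.add_one_le_exp (-(2*b)); linarith
    have h2 : Real.exp b - Real.exp (-b) = Real.exp b * (1 - Real.exp (-(2*b))) := by
      rw [mul_sub, ← Real.exp_add]; ring_nf
    have h3 : (1 : ℝ) - Real.exp (-(2*b)) ≤ 2*b := by linarith
    have h4 := Real.exp_pos b
    calc Real.exp b - Real.exp (-b) = Real.exp b * (1 - Real.exp (-(2*b))) := h2
      _ ≤ Real.exp b * (2*b) := by
          apply mul_le_mul_of_nonneg_left h3 h4.le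
      _ = 2*b*Real.exp b := by ring
  rcases le_or_gt 0 a with ha | ha
  · have h0 : Real.exp (-a) ≤ Real.exp a := Real.exp_le_exp.mpr (by linarith)
    rw [abs_of_nonneg (by linarith), abs_of_nonneg ha]
    exact key a ha
  · have h0 : Real.exp a ≤ Real.exp (-a) := Real.exp_le_exp.mpr (by linarith)
    rw [abs_of_nonpos (by linarith), abs_of_neg ha]
    have := key (-a) (by linarith)
    simpa [neg_neg] using this

lemma hilb_core_bound (a : ℝ) {u : ℝ} (hu : 0 < u) :
    |(Real.exp (2*a*u) - Real.exp (-(2*a*u)))/u| ≤ 4*|a| *Real.exp (2*(|a|)*u) := by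
  have h := hilb_exp_sub_bound (2*a*u)
  have habs : |2*a*u| = 2*|a| *u := by
    rw [abs_mul, abs_mul, abs_of_pos hu, abs_two]
  rw [habs] at h
  rw [abs_div, abs_of_pos hu, div_le_iff₀ hu]
  calc |Real.exp (2*a*u) - Real.exp (-(2*a*u))| ≤ 2*(2*|a| *u)*Real.exp (2*(|a|)*u) := h
    _ = 4*|a| *Real.exp (2*(|a|)*u)*u := by ring

lemma hilbF_bound (x : ℝ) {u : ℝ} (hu : 0 < u) :
    |hilbF x u| ≤ 4*|x| *Real.exp (-u^2 + 2*(|x|)*u) := by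
  have h := hilb_core_bound x hu
  calc |hilbF x u| = Real.exp (-u^2) * |(Real.exp (2*x*u) - Real.exp (-(2*x*u)))/u| := by
        rw [hilbF, abs_mul, abs_of_pos (Real.exp_pos _)]
    _ ≤ Real.exp (-u^2) * (4*|x| *Real.exp (2*|x| *u)) :=
        mul_le_mul_of_nonneg_left h (Real.exp_pos _).le
    _ = 4*|x| *Real.exp (-u^2 + 2*(|x|)*u) := by rw [Real.exp_add]; ring

lemma hilbF_meas (x : ℝ) : Measurable (hilbF x) := by
  unfold hilbF; fun_prop

lemma hilbF'_meas (x : ℝ) : Measurable (hilbF' x) := by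
  unfold hilbF'; fun_prop

lemma hilbK_meas (w : ℝ) : Measurable (hilbK w) := by
  unfold hilbK; fun_prop

lemma hilbF_integrableOn (x : ℝ) : IntegrableOn (hilbF x) (Ioi (0:ℝ)) := by
  refine Integrable.mono' (((hilb_integrable_quad (2*|x|)).const_mul (4*|x|)).integrableOn)
    ((hilbF_meas x).aestronglyMeasurable.restrict) ?_
  filter_upwards [ae_restrict_mem measurableSet_Ioi] with u hu
  simpa using hilbF_bound x hu

lemma hilbK_eq (w u : ℝ) : hilbK w u = Real.exp (-w^2) * hilbF w u := by
  have h1 : Real.exp (-(w-u)^2) = Real.exp (-w^2) * (Real.exp (-u^2) * Real.exp (2*w*u)) := by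
    rw [← Real.exp_add, ← Real.exp_add]; ring_nf
  have h2 : Real.exp (-(w+u)^2) = Real.exp (-w^2) * (Real.exp (-u^2) * Real.exp (-(2*w*u))) := by
    rw [← Real.exp_add, ← Real.exp_add]; ring_nf
  simp only [hilbK, hilbF, h1, h2]
  ring

lemma hilbK_integrableOn (w : ℝ) : IntegrableOn (hilbK w) (Ioi (0:ℝ)) := by
  have : hilbK w = fun u => Real.exp (-w^2) * hilbF w u := funext (hilbK_eq w)
  rw [this]
  exact (hilbF_integrableOn w).const_mul _

lemma hilbF_hasDeriv {u : ℝ} (hu : u ≠ 0) (x : ℝ) :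
    HasDerivAt (fun x => hilbF x u) (hilbF' x u) x := by
  have hlin : HasDerivAt (fun x : ℝ => 2*x*u) (2*u) x := by
    simpa using ((hasDerivAt_id x).const_mul 2).mul_const u
  have h1 : HasDerivAt (fun x : ℝ => Real.exp (2*x*u)) (Real.exp (2*x*u) * (2*u)) x :=
    hlin.exp
  have h2 : HasDerivAt (fun x : ℝ => Real.exp (-(2*x*u)))
      (Real.exp (-(2*x*u)) * -(2*u)) x := hlin.neg.exp
  have h3 := ((h1.sub h2).div_const u).const_mul (Real.exp (-u^2))
  refine h3.congr_deriv ?_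
  rw [hilbF']
  field_simp
  ring

lemma hilbF'_integrand_eq (x u : ℝ) :
    hilbF' x u = 2*Real.exp (-u^2 + 2*x*u) + 2*Real.exp (-u^2 + -(2*x)*u) := by
  rw [hilbF', Real.exp_add, Real.exp_add]
  ring_nf

lemma hilbF'_integral (x : ℝ) :
    ∫ u in Ioi (0:ℝ), hilbF' x u = 2 * Real.sqrt Real.pi * Real.exp (x^2) := by
  have hcongr : ∫ u in Ioi (0:ℝ), hilbF' x u
      = ∫ u in Ioi (0:ℝ), (2*Real.exp (-u^2 + 2*x*u) + 2*Real.exp (-u^2 + -(2*x)*u)) :=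
    setIntegral_congr_fun measurableSet_Ioi (fun u _ => hilbF'_integrand_eq x u)
  have hint1 : Integrable (fun u : ℝ => Real.exp (-u^2 + 2*x*u)) := hilb_integrable_quad (2*x)
  have hint2 : Integrable (fun u : ℝ => Real.exp (-u^2 + -(2*x)*u)) := hilb_integrable_quad (-(2*x))
  rw [hcongr, integral_add ((hint1.const_mul 2).integrableOn) ((hint2.const_mul 2).integrableOn),
    integral_const_mul, integral_const_mul]
  have hneg : ∫ u in Ioi (0:ℝ), Real.exp (-u^2 + -(2*x)*u)
      = ∫ u in Iic (0:ℝ), Real.exp (-u^2 + 2*x*u) := by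
    have := integral_comp_neg_Ioi (0:ℝ) (fun u => Real.exp (-u^2 + 2*x*u))
    rw [neg_zero] at this
    rw [← this]
    refine setIntegral_congr_fun measurableSet_Ioi (fun u _ => ?_)
    ring_nf
  rw [hneg]
  have hsplit : (∫ u in Iic (0:ℝ), Real.exp (-u^2 + 2*x*u))
      + ∫ u in Ioi (0:ℝ), Real.exp (-u^2 + 2*x*u) = ∫ u : ℝ, Real.exp (-u^2 + 2*x*u) :=
    intervalIntegral.integral_Iic_add_Ioi hint1.integrableOn hint1.integrableOn
  have hval : ∫ u : ℝ, Real.exp (-u^2 + 2*x*u) = Real.sqrt Real.pi * Real.exp (x^2) := by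
    have := hilb_integral_quad (2*x)
    have h4 : (2*x)^2/4 = x^2 := by ring
    rw [h4] at this
    exact this
  have := hsplit
  nlinarith [this, hval]

lemma hilbG_hasDeriv (x₀ : ℝ) :
    HasDerivAt hilbG (2 * Real.sqrt Real.pi * Real.exp (x₀^2)) x₀ := by
  set B := |x₀| + 1 with hB
  have key := hasDerivAt_integral_of_dominated_loc_of_deriv_le (μ := volume.restrict (Ioi 0))
    (F := hilbF) (F' := hilbF') (x₀ := x₀)
    (bound := fun u => 4*Real.exp (-u^2 + 2*B*u)) (Metric.ball_mem_nhds x₀ one_pos)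
    (Eventually.of_forall fun x => (hilbF_meas x).aestronglyMeasurable.restrict)
    (hilbF_integrableOn x₀)
    ((hilbF'_meas x₀).aestronglyMeasurable.restrict)
    ?_ ?_ ?_
  · have := key.2
    rwa [hilbF'_integral x₀] at this
  · -- bound
    filter_upwards [ae_restrict_mem measurableSet_Ioi] with u hu x hx
    have hu' : (0:ℝ) < u := hu
    have hxB : |x| ≤ B := by
      have := mem_ball_iff_norm.mp hx
      rw [Real.norm_eq_abs] at this
      have h2 : |x| ≤ |x₀| + |x - x₀| := by
        have := abs_add_le x₀ (x - x₀); simpa using this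
      linarith
    have e1 : Real.exp (2*x*u) ≤ Real.exp (2*B*u) := by
      apply Real.exp_le_exp.mpr
      have : x ≤ B := le_trans (le_abs_self x) hxB
      nlinarith
    have e2 : Real.exp (-(2*x*u)) ≤ Real.exp (2*B*u) := by
      apply Real.exp_le_exp.mpr
      have : -x ≤ B := le_trans (neg_le_abs x) hxB
      nlinarith
    have hpos := Real.exp_pos (-u^2)
    rw [Real.norm_eq_abs, hilbF', abs_mul, abs_of_pos hpos,
      abs_of_pos (by positivity : (0:ℝ) < 2*(Real.exp (2*x*u) + Real.exp (-(2*x*u))))]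
    calc Real.exp (-u^2) * (2*(Real.exp (2*x*u) + Real.exp (-(2*x*u))))
        ≤ Real.exp (-u^2) * (2*(Real.exp (2*B*u) + Real.exp (2*B*u))) := by
          apply mul_le_mul_of_nonneg_left _ hpos.le
          nlinarith
      _ = 4*Real.exp (-u^2 + 2*B*u) := by rw [Real.exp_add]; ring
  · exact ((hilb_integrable_quad (2*B)).const_mul 4).integrableOn
  · filter_upwards [ae_restrict_mem measurableSet_Ioi] with u hu x _
    exact hilbF_hasDeriv (ne_of_gt (show (0:ℝ) < u from hu)) x

lemma hilbG_zero : hilbG 0 = 0 := by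
  simp [hilbG, hilbF]

lemma hilbG_eq (w : ℝ) :
    hilbG w = 2 * Real.sqrt Real.pi * ∫ t in (0:ℝ)..w, Real.exp (t^2) := by
  have hcont : Continuous fun t : ℝ => 2 * Real.sqrt Real.pi * Real.exp (t^2) := by fun_prop
  have hftc := intervalIntegral.integral_eq_sub_of_hasDerivAt
    (f := hilbG) (f' := fun t => 2 * Real.sqrt Real.pi * Real.exp (t^2))
    (a := 0) (b := w) (fun t _ => hilbG_hasDeriv t) (hcont.intervalIntegrable 0 w)
  rw [hilbG_zero, sub_zero] at hftc
  rw [← hftc, intervalIntegral.integral_const_mul]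

lemma hilbK_integral (w : ℝ) :
    ∫ u in Ioi (0:ℝ), hilbK w u
      = Real.exp (-w^2) * (2 * Real.sqrt Real.pi * ∫ t in (0:ℝ)..w, Real.exp (t^2)) := by
  have : ∫ u in Ioi (0:ℝ), hilbK w u = ∫ u in Ioi (0:ℝ), Real.exp (-w^2) * hilbF w u :=
    setIntegral_congr_fun measurableSet_Ioi (fun u _ => hilbK_eq w u)
  rw [this, integral_const_mul, ← hilbG, hilbG_eq]

lemma hilb_h_integrableOn (w : ℝ) {ε : ℝ} (hε : 0 < ε) :
    IntegrableOn (fun u => Real.exp (-(w-u)^2)/u) {u : ℝ | ε < |u|} := by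
  have hmT : MeasurableSet {u : ℝ | ε < |u|} := by
    have : {u : ℝ | ε < |u|} = Ioi ε ∪ Iio (-ε) := by
      ext u; simp [lt_abs, lt_neg]
    rw [this]; exact measurableSet_Ioi.union measurableSet_Iio
  refine Integrable.mono' (((hilb_gauss_shift w).const_mul (1/ε)).integrableOn)
    ((by fun_prop : Measurable fun u : ℝ => Real.exp (-(w-u)^2)/u).aestronglyMeasurable.restrict)
    ?_
  filter_upwards [ae_restrict_mem hmT] with u hu
  have hu' : ε < |u| := hu
  rw [Real.norm_eq_abs, abs_div]
  rw [div_le_iff₀ (lt_trans hε hu'), one_div, abs_of_pos (Real.exp_pos _)]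
  calc Real.exp (-(w-u)^2) = ε⁻¹ * Real.exp (-(w-u)^2) * ε := by
        field_simp
    _ ≤ ε⁻¹ * Real.exp (-(w-u)^2) * |u| := by
        apply mul_le_mul_of_nonneg_left hu'.le
        positivity

lemma hilb_hneg_integrableOn (w : ℝ) {ε : ℝ} (hε : 0 < ε) :
    IntegrableOn (fun u => Real.exp (-(w-(-u))^2)/(-u)) (Ioi ε) := by
  refine Integrable.mono' (((hilb_gauss_shift' w).const_mul (1/ε)).integrableOn)
    ((by fun_prop : Measurable fun u : ℝ => Real.exp (-(w-(-u))^2)/(-u)).aestronglyMeasurable.restrict)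
    ?_
  filter_upwards [ae_restrict_mem measurableSet_Ioi] with u hu
  have hu' : ε < u := hu
  have hupos : 0 < u := lt_trans hε hu'
  have heq : (w - -u)^2 = (w + u)^2 := by ring
  rw [Real.norm_eq_abs, abs_div, heq, abs_neg, abs_of_pos hupos]
  rw [div_le_iff₀ hupos, one_div, abs_of_pos (Real.exp_pos _)]
  calc Real.exp (-(w+u)^2) = ε⁻¹ * Real.exp (-(w+u)^2) * ε := by field_simp
    _ ≤ ε⁻¹ * Real.exp (-(w+u)^2) * u := by
        apply mul_le_mul_of_nonneg_left hu'.le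
        positivity

lemma hilb_cov (w : ℝ) {ε : ℝ} (hε : 0 < ε) :
    ∫ w' in {w' : ℝ | ε < |w - w'|}, Real.exp (-w' ^ 2) / (w - w')
      = ∫ u in Ioi ε, hilbK w u := by
  set h : ℝ → ℝ := fun u => Real.exp (-(w-u)^2)/u with hh
  have hT : {u : ℝ | ε < |u|} = Ioi ε ∪ Iio (-ε) := by
    ext u; simp [lt_abs, lt_neg]
  have hmT : MeasurableSet {u : ℝ | ε < |u|} := by
    rw [hT]; exact measurableSet_Ioi.union measurableSet_Iio
  have hmS : MeasurableSet {w' : ℝ | ε < |w - w'|} := by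
    have : {w' : ℝ | ε < |w - w'|} = (fun w' => w - w') ⁻¹' {u : ℝ | ε < |u|} := rfl
    rw [this]
    exact hmT.preimage (by fun_prop)
  -- step 1: change of variables u = w - w'
  have step1 : ∫ w' in {w' : ℝ | ε < |w - w'|}, Real.exp (-w' ^ 2) / (w - w')
      = ∫ u in {u : ℝ | ε < |u|}, h u := by
    rw [← integral_indicator hmS, ← integral_indicator hmT]
    rw [← integral_sub_left_eq_self (({u : ℝ | ε < |u|}).indicator h) volume w]
    congr 1
    funext w'
    simp only [indicator_apply, mem_setOf_eq, hh, sub_sub_cancel]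
  -- step 2: split and reflect
  have hIoi : IntegrableOn h (Ioi ε) :=
    (hilb_h_integrableOn w hε).mono_set (hT ▸ subset_union_left)
  have hIio : IntegrableOn h (Iio (-ε)) :=
    (hilb_h_integrableOn w hε).mono_set (hT ▸ subset_union_right)
  have step2 : ∫ u in {u : ℝ | ε < |u|}, h u
      = (∫ u in Ioi ε, h u) + ∫ u in Iio (-ε), h u := by
    rw [hT]
    exact setIntegral_union (by
      rw [Set.disjoint_left]; intro a ha hb
      simp only [mem_Ioi] at ha
      simp only [mem_Iio] at hb
      linarith) measurableSet_Iio hIoi hIio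
  have step3 : ∫ u in Iio (-ε), h u = ∫ u in Ioi ε, h (-u) := by
    rw [integral_comp_neg_Ioi ε h, integral_Iic_eq_integral_Iio]
  have step4 : (∫ u in Ioi ε, h u) + ∫ u in Ioi ε, h (-u)
      = ∫ u in Ioi ε, hilbK w u := by
    rw [← integral_add hIoi (by simpa [hh, IntegrableOn] using hilb_hneg_integrableOn w hε)]
    refine setIntegral_congr_fun measurableSet_Ioi (fun u hu => ?_)
    have hu0 : u ≠ 0 := ne_of_gt (lt_trans hε hu)
    have heq : (w - -u)^2 = (w + u)^2 := by ring
    rw [hh]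
    simp only [heq, hilbK]
    ring
  rw [step1, step2, step3, step4]

lemma hilb_tendsto (w : ℝ) :
    Tendsto (fun ε => ∫ u in Ioi ε, hilbK w u) (nhdsWithin 0 (Set.Ioi 0))
      (nhds (∫ u in Ioi (0:ℝ), hilbK w u)) := by
  have key := tendsto_integral_filter_of_dominated_convergence
    (μ := volume.restrict (Ioi (0:ℝ))) (l := nhdsWithin (0:ℝ) (Set.Ioi 0))
    (F := fun ε => (Ioi ε).indicator (hilbK w)) (f := hilbK w)
    (bound := fun u => |hilbK w u|)
    (Eventually.of_forall fun ε =>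
      (((hilbK_meas w).indicator measurableSet_Ioi).aestronglyMeasurable.restrict))
    (Eventually.of_forall fun ε => Eventually.of_forall fun u => by
      simpa [Real.norm_eq_abs] using norm_indicator_le_norm_self (s := Ioi ε) (f := hilbK w) (a := u))
    ((hilbK_integrableOn w).abs)
    ?_
  · refine Tendsto.congr' ?_ key
    filter_upwards [self_mem_nhdsWithin] with ε (hε : (0:ℝ) < ε)
    rw [integral_indicator measurableSet_Ioi, Measure.restrict_restrict measurableSet_Ioi]
    congr 1
    rw [Set.Ioi_inter_Ioi, max_eq_left hε.le]
  · filter_upwards [ae_restrict_mem measurableSet_Ioi] with u hu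
    have hu' : (0:ℝ) < u := hu
    refine Tendsto.congr' ?_ tendsto_const_nhds
    filter_upwards [mem_nhdsWithin_of_mem_nhds (Iio_mem_nhds hu')] with ε hε
    exact (indicator_of_mem (show u ∈ Ioi ε from hε) _).symm

/-- The Hilbert transform of the Gaussian equals `(2/√π)` times Dawson's
integral `D(w) = e^{-w²} ∫₀^w e^{t²} dt`: the limit as `ε → 0⁺` of
`(1/π) ∫_{|w − w'| > ε} e^{-w'²}/(w − w') dw'` exists and equals
`(2/√π) · D(w)`.  Consequently the transfer function
`H̃(w) = e^{-w²} − (2 i/√π) D(w)` satisfies `Im H̃ = −H[Re H̃]`. -/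
theorem stmt_10 (w : ℝ) :
    Tendsto (fun ε : ℝ =>
        (1 / Real.pi) * ∫ w' in {w' : ℝ | ε < |w - w'|}, Real.exp (-w' ^ 2) / (w - w'))
      (nhdsWithin 0 (Set.Ioi 0))
      (nhds ((2 / Real.sqrt Real.pi) *
        (Real.exp (-w ^ 2) * ∫ t in (0 : ℝ)..w, Real.exp (t ^ 2)))) ∧
    ((Real.exp (-w ^ 2) : ℂ) -
        (2 * Complex.I / (Real.sqrt Real.pi : ℂ)) *
          ((Real.exp (-w ^ 2) * ∫ t in (0 : ℝ)..w, Real.exp (t ^ 2) : ℝ) : ℂ)).im =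
      -((2 / Real.sqrt Real.pi) *
        (Real.exp (-w ^ 2) * ∫ t in (0 : ℝ)..w, Real.exp (t ^ 2))) := by
  constructor
  · have hlim := (hilb_tendsto w).const_mul (1/Real.pi)
    have hval : (1/Real.pi) * ∫ u in Ioi (0:ℝ), hilbK w u
        = (2 / Real.sqrt Real.pi) *
            (Real.exp (-w ^ 2) * ∫ t in (0 : ℝ)..w, Real.exp (t ^ 2)) := by
      rw [hilbK_integral w]
      have h1 : Real.sqrt Real.pi * Real.sqrt Real.pi = Real.pi :=
        Real.mul_self_sqrt Real.pi_pos.le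
      have h2 : Real.pi ≠ 0 := Real.pi_ne_zero
      have h3 : Real.sqrt Real.pi ≠ 0 := (Real.sqrt_pos.mpr Real.pi_pos).ne'
      field_simp
      linear_combination (∫ t in (0:ℝ)..w, Real.exp (t^2)) * h1
    rw [← hval]
    refine Tendsto.congr' ?_ hlim
    filter_upwards [self_mem_nhdsWithin] with ε (hε : (0:ℝ) < ε)
    rw [hilb_cov w hε]
  · have h3 : Real.sqrt Real.pi ≠ 0 := (Real.sqrt_pos.mpr Real.pi_pos).ne'
    have hs : (Real.sqrt Real.pi : ℂ) ≠ 0 := Complex.ofReal_ne_zero.mpr h3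
    have key : (2 * Complex.I / (Real.sqrt Real.pi : ℂ)) *
          ((Real.exp (-w ^ 2) * ∫ t in (0 : ℝ)..w, Real.exp (t ^ 2) : ℝ) : ℂ)
        = Complex.I * ((((2 / Real.sqrt Real.pi) *
            (Real.exp (-w ^ 2) * ∫ t in (0 : ℝ)..w, Real.exp (t ^ 2))) : ℝ) : ℂ) := by
      push_cast
      field_simp
    rw [key]
    have hcast : ((Real.exp (-w^2) : ℝ) : ℂ) = Complex.exp (-(w:ℂ) ^ 2) := by
      push_cast
      ring_nf
    simp only [Complex.sub_im, Complex.mul_im, Complex.I_re, Complex.I_im,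
      Complex.ofReal_re, Complex.ofReal_im]
    ring
end
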